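/- Let h: [n] → [n] be a Hessenberg function. For 1 < j ≤ n and any i with h(j-1) ≤ i ≤ n, the polynomial f_{i,j-1} lies in the ideal ⟨f_{h(1),1}, ..., f_{h(j-1),j-1}⟩ of ℚ[x_1,...,x_n]. -/
import Mathlib


open MvPolynomial

/-- The variable `x_m` (1-indexed) in `ℚ[x_1,…,x_n]`. -/
noncomputable def xv (n : ℕ) (m : ℕ) : MvPolynomial (Fin n) ℚ :=
  if h : m - 1 < n then X ⟨m - 1, h⟩ else 0

/-- `f_{i,j} = ∑_{k=1}^{j} (∏_{ℓ=j+1}^{i} (x_k - x_ℓ)) x_k`. -/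
noncomputable def fpoly (n i j : ℕ) : MvPolynomial (Fin n) ℚ :=
  ∑ k ∈ Finset.Icc 1 j, (∏ l ∈ Finset.Icc (j+1) i, (xv n k - xv n l)) * xv n k

/-- `g_{i,j} = ∑_{k=1}^{j} ∏_{ℓ=j+1}^{i} (x_k - x_ℓ)`. -/
noncomputable def gpoly (n i j : ℕ) : MvPolynomial (Fin n) ℚ :=
  ∑ k ∈ Finset.Icc 1 j, ∏ l ∈ Finset.Icc (j+1) i, (xv n k - xv n l)

/-- `h` is a Hessenberg function on `{1,…,n}`. -/
def IsHessenberg (n : ℕ) (h : ℕ → ℕ) : Prop :=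
  (∀ i, 1 ≤ i → i ≤ n → i ≤ h i ∧ h i ≤ n) ∧
  (∀ i, 1 ≤ i → i < n → h i ≤ h (i + 1))

/-- Key recursion: `f_{i+1,j} = f_{i,j-1} + (x_j - x_{i+1}) f_{i,j}` for `1 ≤ j ≤ i`. -/
lemma fpoly_rec (n i j : ℕ) (hj : 1 ≤ j) (hij : j ≤ i) :
    fpoly n (i+1) j = fpoly n i (j-1) + (xv n j - xv n (i+1)) * fpoly n i j := by
  have h1 : (j - 1) + 1 = j := Nat.succ_pred_eq_of_pos hj
  unfold fpoly
  rw [h1, Finset.mul_sum]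
  have hext : ∑ k ∈ Finset.Icc 1 (j-1), (∏ l ∈ Finset.Icc j i, (xv n k - xv n l)) * xv n k
      = ∑ k ∈ Finset.Icc 1 j, (∏ l ∈ Finset.Icc j i, (xv n k - xv n l)) * xv n k := by
    conv_rhs => rw [← h1]
    rw [Finset.sum_Icc_succ_top (by omega : 1 ≤ j - 1 + 1), h1]
    have : (∏ l ∈ Finset.Icc j i, (xv n j - xv n l)) = 0 :=
      Finset.prod_eq_zero (Finset.mem_Icc.mpr ⟨le_refl j, hij⟩) (sub_self _)
    rw [this, zero_mul, add_zero]
  rw [hext, ← Finset.sum_add_distrib]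
  refine Finset.sum_congr rfl fun k _ => ?_
  have hsplit : Finset.Icc j i = insert j (Finset.Icc (j+1) i) := by
    ext x; simp [Finset.mem_Icc]; omega
  rw [Finset.prod_Icc_succ_top (by omega : j + 1 ≤ i + 1), hsplit,
    Finset.prod_insert (by simp)]
  ring

/-- For any `1 ≤ j ≤ n` and `h j ≤ i ≤ n`, the polynomial `f_{i,j}` lies in the ideal
generated by `f_{h(1),1}, …, f_{h(j),j}`. -/
lemma fpoly_main (n : ℕ) (h : ℕ → ℕ) (hh : IsHessenberg n h) :
    ∀ j, 1 ≤ j → j ≤ n → ∀ i, h j ≤ i → i ≤ n →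
      fpoly n i j ∈ Ideal.span ((fun m => fpoly n (h m) m) '' Set.Icc 1 j) := by
  intro j
  induction j with
  | zero => omega
  | succ j ih =>
    intro hj1 hjn i hhi hin
    induction i, hhi using Nat.le_induction with
    | base =>
      exact Ideal.subset_span ⟨j + 1, Set.mem_Icc.mpr ⟨hj1, le_refl _⟩, rfl⟩
    | succ i hi ihh =>
      have hji : j + 1 ≤ i := le_trans (hh.1 (j+1) hj1 hjn).1 hi
      rw [fpoly_rec n i (j+1) (by omega) hji]
      have hmem2 : (xv n (j+1) - xv n (i+1)) * fpoly n i (j+1) ∈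
          Ideal.span ((fun m => fpoly n (h m) m) '' Set.Icc 1 (j+1)) :=
        Ideal.mul_mem_left _ _ (ihh (by omega))
      have hmem1 : fpoly n i (j + 1 - 1) ∈
          Ideal.span ((fun m => fpoly n (h m) m) '' Set.Icc 1 (j+1)) := by
        simp only [Nat.add_sub_cancel]
        rcases Nat.eq_zero_or_pos j with hj0 | hj0
        · subst hj0
          have : fpoly n i 0 = 0 := by simp [fpoly]
          rw [this]; exact Ideal.zero_mem _
        · have hmono : h j ≤ h (j+1) := hh.2 j hj0 (by omega)
          have := ih hj0 (by omega) i (by omega) (by omega)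
          refine Ideal.span_mono ?_ this
          exact Set.image_mono (Set.Icc_subset_Icc_right (by omega))
      exact Ideal.add_mem _ hmem1 hmem2

theorem fpoly_mem_ideal (n : ℕ) (h : ℕ → ℕ) (hh : IsHessenberg n h)
    (j i : ℕ) (hj1 : 1 < j) (hjn : j ≤ n) (hi1 : h (j - 1) ≤ i) (hin : i ≤ n) :
    fpoly n i (j - 1) ∈
      Ideal.span ((fun m => fpoly n (h m) m) '' Set.Icc 1 (j - 1)) := by
  exact fpoly_main n h hh (j-1) (by omega) (by omega) i hi1 hin
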